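/- Let β > 0, b ∈ ℝⁿ with |b| ≤ 1/8, M a symmetric n×n matrix with M e_n = 0 and ‖M‖ ≤ 1/8, and define W(x) = β(1 + b·x)(x_n − ½ xᵀMx). Then for all x ∈ B_{1/2} one has ∂_n W(x) ≥ β/2. Consequently, for any s ∈ (0, 1/4) and any continuous function u on B_{1/2} with |u − W| ≤ βs/4 on B_{1/4}, one has W(x − s e_n) ≤ u(x) ≤ W(x + s e_n) for all x ∈ B_{1/8}. -/

import Mathlib

open Matrix

/-- The Euclidean norm of a vector in `Fin m → ℝ`. -/
noncomputable def nrm {m : ℕ} (v : Fin m → ℝ) : ℝ := Real.sqrt (v ⬝ᵥ v)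

lemma nrm_nonneg {m : ℕ} (v : Fin m → ℝ) : 0 ≤ nrm v := Real.sqrt_nonneg _

lemma dot_self_nonneg {m : ℕ} (v : Fin m → ℝ) : 0 ≤ v ⬝ᵥ v :=
  Finset.sum_nonneg fun i _ => mul_self_nonneg _

lemma abs_dot_le {m : ℕ} (v w : Fin m → ℝ) : |v ⬝ᵥ w| ≤ nrm v * nrm w := by
  have h := Finset.sum_mul_sq_le_sq_mul_sq Finset.univ v w
  have h2 : (v ⬝ᵥ w) ^ 2 ≤ (v ⬝ᵥ v) * (w ⬝ᵥ w) := by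
    simpa [dotProduct, sq] using h
  calc |v ⬝ᵥ w| = Real.sqrt ((v ⬝ᵥ w) ^ 2) := (Real.sqrt_sq_eq_abs _).symm
    _ ≤ Real.sqrt ((v ⬝ᵥ v) * (w ⬝ᵥ w)) := Real.sqrt_le_sqrt h2
    _ = nrm v * nrm w := Real.sqrt_mul (dot_self_nonneg v) _

lemma abs_apply_le {m : ℕ} (v : Fin m → ℝ) (i : Fin m) : |v i| ≤ nrm v := by
  have h : v i * v i ≤ v ⬝ᵥ v :=
    Finset.single_le_sum (f := fun j => v j * v j)
      (fun j _ => mul_self_nonneg _) (Finset.mem_univ i)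
  calc |v i| = Real.sqrt (v i * v i) := (Real.sqrt_mul_self_eq_abs _).symm
    _ ≤ nrm v := Real.sqrt_le_sqrt h

set_option maxHeartbeats 1000000 in
/-- Nondegeneracy of `W(x) = β(1 + b·x)(x_n − ½xᵀMx)` in the `e_n` direction
(`∂_n W ≥ β/2` in `B_{1/2}`) and the resulting trapping of any `u` that is
`βs/4`-close to `W` between the `e_n`-translates `W(x ∓ s e_n)`. -/
theorem stmt9 {n : ℕ} (β s : ℝ) (hβ : 0 < β) (b : Fin (n + 1) → ℝ) (hb : nrm b ≤ 1 / 8)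
    (M : Matrix (Fin (n + 1)) (Fin (n + 1)) ℝ) (hM : M.IsSymm)
    (hMe : M.mulVec (Pi.single (Fin.last n) 1) = 0)
    (hMK : ∀ v : Fin (n + 1) → ℝ, nrm (M.mulVec v) ≤ (1 / 8) * nrm v)
    (W : (Fin (n + 1) → ℝ) → ℝ)
    (hW : ∀ x, W x = β * (1 + b ⬝ᵥ x) * (x (Fin.last n) - (1 / 2) * (x ⬝ᵥ M.mulVec x))) :
    (∀ x : Fin (n + 1) → ℝ, nrm x < 1 / 2 →
      β / 2 ≤ deriv (fun t : ℝ => W (x + t • (Pi.single (Fin.last n) 1 : Fin (n + 1) → ℝ))) 0) ∧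
    (0 < s → s < 1 / 4 → ∀ u : (Fin (n + 1) → ℝ) → ℝ, Continuous u →
      (∀ x : Fin (n + 1) → ℝ, nrm x ≤ 1 / 4 → |u x - W x| ≤ β * s / 4) →
      ∀ x : Fin (n + 1) → ℝ, nrm x ≤ 1 / 8 →
        W (x - s • (Pi.single (Fin.last n) 1 : Fin (n + 1) → ℝ)) ≤ u x ∧
        u x ≤ W (x + s • (Pi.single (Fin.last n) 1 : Fin (n + 1) → ℝ))) := by
  have hcross : ∀ v : Fin (n + 1) → ℝ,
      (Pi.single (Fin.last n) 1 : Fin (n + 1) → ℝ) ⬝ᵥ M.mulVec v = 0 := by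
    intro v
    rw [Matrix.dotProduct_mulVec]
    have hz : Matrix.vecMul (Pi.single (Fin.last n) 1 : Fin (n + 1) → ℝ) M = 0 := by
      rw [← hM, Matrix.vecMul_transpose, hMe]
    rw [hz, zero_dotProduct]
  have key : ∀ (x : Fin (n + 1) → ℝ) (t : ℝ),
      W (x + t • (Pi.single (Fin.last n) 1 : Fin (n + 1) → ℝ)) =
        β * ((1 + b ⬝ᵥ x + t * b (Fin.last n)) *
          (x (Fin.last n) - (1 / 2) * (x ⬝ᵥ M.mulVec x) + t)) := by
    intro x t
    rw [hW]
    have h1 : b ⬝ᵥ (x + t • (Pi.single (Fin.last n) 1 : Fin (n + 1) → ℝ)) =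
        b ⬝ᵥ x + t * b (Fin.last n) := by
      rw [dotProduct_add, dotProduct_smul, dotProduct_single]
      simp [smul_eq_mul, mul_comm]
    have h2 : (x + t • (Pi.single (Fin.last n) 1 : Fin (n + 1) → ℝ)) (Fin.last n) =
        x (Fin.last n) + t := by
      simp
    have h3 : (x + t • (Pi.single (Fin.last n) 1 : Fin (n + 1) → ℝ)) ⬝ᵥ
        M.mulVec (x + t • (Pi.single (Fin.last n) 1 : Fin (n + 1) → ℝ)) =
        x ⬝ᵥ M.mulVec x := by
      simp [Matrix.mulVec_add, Matrix.mulVec_smul, hMe, dotProduct_add,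
        add_dotProduct, dotProduct_smul, smul_dotProduct, hcross]
    rw [h1, h2, h3]
    ring
  constructor
  · -- derivative bound
    intro x hx
    have hbx := abs_dot_le b x
    have hbn := (abs_apply_le b (Fin.last n)).trans hb
    have hxl := abs_apply_le x (Fin.last n)
    have hq : |x ⬝ᵥ M.mulVec x| ≤ 1 / 8 * (nrm x * nrm x) := by
      calc |x ⬝ᵥ M.mulVec x| ≤ nrm x * nrm (M.mulVec x) := abs_dot_le _ _
        _ ≤ nrm x * (1 / 8 * nrm x) :=
            mul_le_mul_of_nonneg_left (hMK x) (nrm_nonneg x)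
        _ = 1 / 8 * (nrm x * nrm x) := by ring
    have hr0 := nrm_nonneg x
    set r := nrm x with hr
    have hbx' : |b ⬝ᵥ x| ≤ 1 / 8 * r := by
      calc |b ⬝ᵥ x| ≤ nrm b * r := hbx
        _ ≤ 1 / 8 * r := mul_le_mul_of_nonneg_right hb hr0
    have hD : deriv (fun t : ℝ =>
        W (x + t • (Pi.single (Fin.last n) 1 : Fin (n + 1) → ℝ))) 0 =
        β * ((1 + b ⬝ᵥ x) + b (Fin.last n) *
          (x (Fin.last n) - (1 / 2) * (x ⬝ᵥ M.mulVec x))) := by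
      have hfun : (fun t : ℝ =>
          W (x + t • (Pi.single (Fin.last n) 1 : Fin (n + 1) → ℝ))) =
          fun t : ℝ => β * ((1 + b ⬝ᵥ x + t * b (Fin.last n)) *
            (x (Fin.last n) - (1 / 2) * (x ⬝ᵥ M.mulVec x) + t)) :=
        funext fun t => key x t
      rw [hfun]
      have h1 : HasDerivAt (fun t : ℝ => 1 + b ⬝ᵥ x + t * b (Fin.last n))
          (b (Fin.last n)) 0 := by
        simpa using ((hasDerivAt_id (0 : ℝ)).mul_const (b (Fin.last n))).const_add
          (1 + b ⬝ᵥ x)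
      have h2 : HasDerivAt (fun t : ℝ =>
          x (Fin.last n) - (1 / 2) * (x ⬝ᵥ M.mulVec x) + t) 1 0 := by
        simpa using (hasDerivAt_id (0 : ℝ)).const_add
          (x (Fin.last n) - (1 / 2) * (x ⬝ᵥ M.mulVec x))
      have h3 := ((h1.mul h2).const_mul β).deriv
      exact h3.trans (by ring)
    rw [hD]
    obtain ⟨hbn1, hbn2⟩ := abs_le.mp hbn
    obtain ⟨hxl1, hxl2⟩ := abs_le.mp hxl
    obtain ⟨hq1, hq2⟩ := abs_le.mp hq
    obtain ⟨hbx1, hbx2⟩ := abs_le.mp hbx'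
    have hfac : (1 / 2 : ℝ) ≤ (1 + b ⬝ᵥ x) + b (Fin.last n) *
        (x (Fin.last n) - (1 / 2) * (x ⬝ᵥ M.mulVec x)) := by
      nlinarith [mul_le_mul_of_nonneg_left hx.le hr0,
        mul_nonneg (by linarith : (0:ℝ) ≤ 1/8 - b (Fin.last n))
          (by linarith : (0:ℝ) ≤ r + 1/16 * (r*r) - (x (Fin.last n) - 1/2 * (x ⬝ᵥ M.mulVec x))),
        mul_nonneg (by linarith : (0:ℝ) ≤ 1/8 + b (Fin.last n))
          (by linarith : (0:ℝ) ≤ r + 1/16 * (r*r) + (x (Fin.last n) - 1/2 * (x ⬝ᵥ M.mulVec x)))]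
    calc β / 2 = β * (1 / 2) := by ring
      _ ≤ _ := mul_le_mul_of_nonneg_left hfac hβ.le
  · -- trapping
    intro hs hs4 u _ hclose x hx
    have hbx := abs_dot_le b x
    have hbn := (abs_apply_le b (Fin.last n)).trans hb
    have hxl := abs_apply_le x (Fin.last n)
    have hq : |x ⬝ᵥ M.mulVec x| ≤ 1 / 8 * (nrm x * nrm x) := by
      calc |x ⬝ᵥ M.mulVec x| ≤ nrm x * nrm (M.mulVec x) := abs_dot_le _ _
        _ ≤ nrm x * (1 / 8 * nrm x) :=
            mul_le_mul_of_nonneg_left (hMK x) (nrm_nonneg x)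
        _ = 1 / 8 * (nrm x * nrm x) := by ring
    have hr0 := nrm_nonneg x
    set r := nrm x with hr
    have hbx' : |b ⬝ᵥ x| ≤ 1 / 8 * r := by
      calc |b ⬝ᵥ x| ≤ nrm b * r := hbx
        _ ≤ 1 / 8 * r := mul_le_mul_of_nonneg_right hb hr0
    obtain ⟨hbn1, hbn2⟩ := abs_le.mp hbn
    obtain ⟨hxl1, hxl2⟩ := abs_le.mp hxl
    obtain ⟨hq1, hq2⟩ := abs_le.mp hq
    obtain ⟨hbx1, hbx2⟩ := abs_le.mp hbx'
    have hWx : W x = β * ((1 + b ⬝ᵥ x) *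
        (x (Fin.last n) - (1 / 2) * (x ⬝ᵥ M.mulVec x))) := by
      rw [hW]; ring
    have hxsub : x - s • (Pi.single (Fin.last n) 1 : Fin (n + 1) → ℝ) =
        x + (-s) • (Pi.single (Fin.last n) 1 : Fin (n + 1) → ℝ) := by
      rw [neg_smul, ← sub_eq_add_neg]
    have hsbn1 : s * (-(1/8)) ≤ s * b (Fin.last n) :=
      mul_le_mul_of_nonneg_left hbn1 hs.le
    have hsbn2 : s * b (Fin.last n) ≤ s * (1/8) :=
      mul_le_mul_of_nonneg_left hbn2 hs.le
    have hbnc : -(1/32 : ℝ) ≤ b (Fin.last n) *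
        (x (Fin.last n) - (1 / 2) * (x ⬝ᵥ M.mulVec x)) := by
      nlinarith [mul_nonneg (by linarith : (0:ℝ) ≤ 1/8 + b (Fin.last n))
          (by linarith : (0:ℝ) ≤ r + 1/16 * (r*r) + (x (Fin.last n) - 1/2 * (x ⬝ᵥ M.mulVec x))),
        mul_nonneg (by linarith : (0:ℝ) ≤ 1/8 - b (Fin.last n))
          (by linarith : (0:ℝ) ≤ r + 1/16 * (r*r) - (x (Fin.last n) - 1/2 * (x ⬝ᵥ M.mulVec x))),
        mul_le_mul hx hx hr0 (by norm_num : (0:ℝ) ≤ 1/8)]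
    have hfacm : (1 / 2 : ℝ) ≤ (1 + b ⬝ᵥ x) + b (Fin.last n) *
        (x (Fin.last n) - (1 / 2) * (x ⬝ᵥ M.mulVec x)) - s * b (Fin.last n) := by
      linarith
    have hfacp : (1 / 2 : ℝ) ≤ (1 + b ⬝ᵥ x) + b (Fin.last n) *
        (x (Fin.last n) - (1 / 2) * (x ⬝ᵥ M.mulVec x)) + s * b (Fin.last n) := by
      linarith
    have hβs : (0:ℝ) ≤ β * s := by positivity
    have hu := hclose x (by linarith)
    obtain ⟨hu1, hu2⟩ := abs_le.mp hu
    constructor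
    · -- lower trap
      have e1 : W x - W (x - s • (Pi.single (Fin.last n) 1 : Fin (n + 1) → ℝ)) =
          β * s * ((1 + b ⬝ᵥ x) + b (Fin.last n) *
            (x (Fin.last n) - (1 / 2) * (x ⬝ᵥ M.mulVec x)) - s * b (Fin.last n)) := by
        rw [hxsub, key x (-s), hWx]; ring
      have e2 : β * s * (1/2) ≤ β * s * ((1 + b ⬝ᵥ x) + b (Fin.last n) *
            (x (Fin.last n) - (1 / 2) * (x ⬝ᵥ M.mulVec x)) - s * b (Fin.last n)) :=
        mul_le_mul_of_nonneg_left hfacm hβs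
      linarith
    · have e1 : W (x + s • (Pi.single (Fin.last n) 1 : Fin (n + 1) → ℝ)) - W x =
          β * s * ((1 + b ⬝ᵥ x) + b (Fin.last n) *
            (x (Fin.last n) - (1 / 2) * (x ⬝ᵥ M.mulVec x)) + s * b (Fin.last n)) := by
        rw [key x s, hWx]; ring
      have e2 : β * s * (1/2) ≤ β * s * ((1 + b ⬝ᵥ x) + b (Fin.last n) *
            (x (Fin.last n) - (1 / 2) * (x ⬝ᵥ M.mulVec x)) + s * b (Fin.last n)) :=
        mul_le_mul_of_nonneg_left hfacp hβs
      linarith
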